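/- Let p, m be integers with m ≥ p ≥ 1 and let Q ∈ ℝ^{p×m} with rank Q = p, with canonical indices c_1(Q),…,c_p(Q). Then c_i(Q) = m - p + i for every i ∈ {1,…,p} (equivalently, the canonical form of Q is upper triangular) if and only if for every i ∈ {1,…,p} the i×i matrix formed from the last i rows and the last i columns of Q is invertible. -/
import Mathlib


/-- A matrix `L` is lower unitriangular if `L i j = 0` whenever `i < j`
and `L i i = 1` for every `i`. -/
def IsLowerUnitriangular {m : ℕ} (L : Matrix (Fin m) (Fin m) ℝ) : Prop :=
  (∀ i j : Fin m, i < j → L i j = 0) ∧ ∀ i : Fin m, L i i = 1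

/-- `Q` is in canonical form with witnessing (distinct) column indices `c`. -/
def IsCanonicalFormWith {p m : ℕ} (Q : Matrix (Fin p) (Fin m) ℝ) (c : Fin p → Fin m) : Prop :=
  Function.Injective c ∧
    ∀ i : Fin p,
      Q i (c i) ≠ 0 ∧
      (∀ j : Fin m, c i < j → (∀ k : Fin p, i < k → j ≠ c k) → Q i j = 0) ∧
      (∀ j : Fin m, j < c i → Q i j = 0)

lemma det_sub_mul {p m i : ℕ} (him : i ≤ m)
    (Q : Matrix (Fin p) (Fin m) ℝ) (L : Matrix (Fin m) (Fin m) ℝ)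
    (hL : IsLowerUnitriangular L) (f : Fin i → Fin p)
    (g : Fin i → Fin m) (hg : ∀ a : Fin i, (g a : ℕ) = m - i + a) :
    ((Q * L).submatrix f g).det = (Q.submatrix f g).det := by
  have hgmono : ∀ a b : Fin i, a < b → g a < g b := by
    intro a b hab
    have := hg a; have := hg b
    exact Fin.lt_def.mpr (by omega)
  have key : (Q * L).submatrix f g = (Q.submatrix f g) * (L.submatrix g g) := by
    ext a b
    simp only [Matrix.submatrix_apply, Matrix.mul_apply]
    have hm : m - i + i = m := by omega
    calc ∑ k : Fin m, Q (f a) k * L k (g b)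
        = ∑ k : Fin (m - i + i), Q (f a) (Fin.cast hm k) * L (Fin.cast hm k) (g b) := by
          exact (Fintype.sum_equiv (finCongr hm) _ _ (fun k => rfl)).symm
      _ = ∑ k : Fin i, Q (f a) (g k) * L (g k) (g b) := by
          rw [Fin.sum_univ_add]
          have h1 : ∀ k : Fin (m - i),
              Q (f a) (Fin.cast hm (Fin.castAdd i k)) * L (Fin.cast hm (Fin.castAdd i k)) (g b) = 0 := by
            intro k
            have : L (Fin.cast hm (Fin.castAdd i k)) (g b) = 0 := by
              apply hL.1
              have := hg b
              exact Fin.lt_def.mpr (by simp [Fin.cast, Fin.castAdd]; omega)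
            rw [this, mul_zero]
          rw [Finset.sum_congr rfl (fun k _ => h1 k), Finset.sum_const_zero, zero_add]
          apply Finset.sum_congr rfl
          intro k _
          have : Fin.cast hm (Fin.natAdd (m - i) k) = g k := by
            apply Fin.ext
            simp [hg k]
          rw [this]
  rw [key, Matrix.det_mul]
  have : (L.submatrix g g).det = 1 := by
    rw [Matrix.det_of_lowerTriangular]
    · simp [hL.2]
    · intro a b hab
      exact hL.1 _ _ (hgmono _ _ hab)
  rw [this, mul_one]


/-- The canonical indices of `Q` satisfy `c_i(Q) = m - p + i` for every `i`
(i.e. the canonical form of `Q` is upper triangular) if and only if, for every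
`i ∈ {1,…,p}`, the `i × i` matrix formed from the last `i` rows and the last `i`
columns of `Q` is invertible. -/
theorem canonical_upper_triangular_iff_minors_invertible {p m : ℕ}
    (hp : 1 ≤ p) (hpm : p ≤ m)
    (Q : Matrix (Fin p) (Fin m) ℝ) (hQ : Q.rank = p)
    (L : Matrix (Fin m) (Fin m) ℝ) (hL : IsLowerUnitriangular L)
    (c : Fin p → Fin m) (hc : IsCanonicalFormWith (Q * L) c) :
    (∀ i : Fin p, (c i : ℕ) = m - p + (i : ℕ)) ↔
      (∀ i : ℕ, 1 ≤ i → ∀ hip : i ≤ p,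
        IsUnit (Matrix.det (Q.submatrix
          (fun a : Fin i => (⟨p - i + (a : ℕ), by have := a.isLt; omega⟩ : Fin p))
          (fun a : Fin i => (⟨m - i + (a : ℕ), by have := a.isLt; omega⟩ : Fin m))))) := by
  have hc' := hc
  obtain ⟨hcinj, hcrow⟩ := hc'
  obtain ⟨hcinj, hcrow⟩ := hc
  constructor
  · intro hci i h1 hip
    have him : i ≤ m := le_trans hip hpm
    rw [isUnit_iff_ne_zero,
      ← det_sub_mul him Q L hL
        (fun a : Fin i => (⟨p - i + (a : ℕ), by have := a.isLt; omega⟩ : Fin p))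
        (fun a : Fin i => (⟨m - i + (a : ℕ), by have := a.isLt; omega⟩ : Fin m))
        (fun a => rfl)]
    set f : Fin i → Fin p := fun a => (⟨p - i + (a : ℕ), by have := a.isLt; omega⟩ : Fin p)
    set g : Fin i → Fin m := fun a => (⟨m - i + (a : ℕ), by have := a.isLt; omega⟩ : Fin m)
    have hcval : ∀ a : Fin i, c (f a) = g a := by
      intro a
      apply Fin.ext
      have := hci (f a)
      simp only [f, g] at this ⊢
      omega
    have htri : ((Q * L).submatrix f g).BlockTriangular id := by
      intro a b hab
      have hab' : (b : ℕ) < a := hab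
      simp only [Matrix.submatrix_apply]
      apply (hcrow (f a)).2.2
      rw [hcval a]
      exact Fin.lt_def.mpr (by simp only [f, g]; omega)
    rw [Matrix.det_of_upperTriangular htri]
    apply Finset.prod_ne_zero_iff.mpr
    intro a _
    simp only [Matrix.submatrix_apply, ← hcval a]
    exact (hcrow (f a)).1
  · intro hdet
    suffices key : ∀ i : Fin p, (∀ k : Fin p, i < k → (c k : ℕ) = m - p + (k : ℕ)) →
        (c i : ℕ) = m - p + (i : ℕ) by
      have main : ∀ n : ℕ, ∀ i : Fin p, p - (i : ℕ) ≤ n → (c i : ℕ) = m - p + (i : ℕ) := by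
        intro n
        induction n with
        | zero => intro i h; have := i.isLt; omega
        | succ n ih =>
          intro i h
          apply key
          intro k hk
          have hik : (i : ℕ) < (k : ℕ) := hk
          exact ih k (by have := k.isLt; omega)
      intro i
      exact main p i (by omega)
    intro i IH
    have hip := i.isLt
    have hcim := (c i).isLt
    have hle : (c i : ℕ) ≤ m - p + (i : ℕ) := by
      by_contra h
      push_neg at h
      have hkp : (c i : ℕ) - (m - p) < p := by omega
      have hik : (i : ℕ) < (c i : ℕ) - (m - p) := by omega
      have heq : c ⟨(c i : ℕ) - (m - p), hkp⟩ = c i := by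
        apply Fin.ext
        rw [IH ⟨(c i : ℕ) - (m - p), hkp⟩ (Fin.lt_def.mpr hik)]
        show m - p + ((c i : ℕ) - (m - p)) = (c i : ℕ)
        omega
      have h2 : (c i : ℕ) - (m - p) = (i : ℕ) := congrArg Fin.val (hcinj heq)
      omega
    by_contra h
    have hlt : (c i : ℕ) < m - p + (i : ℕ) := by omega
    set n : ℕ := p - (i : ℕ) with hn
    have h1 : 1 ≤ n := by omega
    have hnp : n ≤ p := by omega
    have hnm : n ≤ m := le_trans hnp hpm
    have hdet' := hdet n h1 hnp
    rw [isUnit_iff_ne_zero] at hdet'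
    apply hdet'
    rw [← det_sub_mul hnm Q L hL
        (fun a : Fin n => (⟨p - n + (a : ℕ), by have := a.isLt; omega⟩ : Fin p))
        (fun a : Fin n => (⟨m - n + (a : ℕ), by have := a.isLt; omega⟩ : Fin m))
        (fun a => rfl)]
    apply Matrix.det_eq_zero_of_column_eq_zero ⟨0, by omega⟩
    intro a
    simp only [Matrix.submatrix_apply]
    by_cases ha : (a : ℕ) = 0
    · have hrow : (⟨p - n + (a : ℕ), by have := a.isLt; omega⟩ : Fin p) = i := by
        apply Fin.ext; simp; omega
      rw [hrow]
      apply (hcrow i).2.1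
      · exact Fin.lt_def.mpr (by
          show (c i : ℕ) < m - n + ((⟨0, by omega⟩ : Fin n) : ℕ)
          show (c i : ℕ) < m - n + 0
          omega)
      · intro k hk hne
        have := IH k hk
        have hik : (i : ℕ) < (k : ℕ) := hk
        have := congrArg Fin.val hne
        simp at this
        omega
    · apply (hcrow _).2.2
      have hrh : (i : ℕ) < p - n + (a : ℕ) := by have := a.isLt; omega
      have := IH (⟨p - n + (a : ℕ), by have := a.isLt; omega⟩ : Fin p) (Fin.lt_def.mpr hrh)
      exact Fin.lt_def.mpr (by simp at this ⊢; omega)
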